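/- Let s ≥ 1 and let m₁, m₂, n₁, n₂, M, N satisfy 0 < N < 1, M > N + s, n₁ > 1 + √3, n₂ > 1, m₁ > √2, and m₂ > max{ n₂, ((m₁n₁ + M m₁² n₁ + n₁²)/m₁²)^{1/(1−N)}, ((n₁/(2m₁))(1+√5))^{1/(M−N−s)} }. Set m* = m₁ m₂^M and n* = n₁ n₂^N. Let T ∈ (0, ∞] and let a, b : [0,T) → ℝ be differentiable solutions of b' = −b²/2 − (t+1)^s a² − a + 1 and a' = −b a on [0,T). If a(0) = a₀ > 0, b(0) > 0, and b(0) > m* a₀ − n*, then for all t ∈ [0,T): b(t) > 0 and 0 < a(t) ≤ a₀. -/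

import Mathlib

open Real Set Filter Topology


/-- If `f` is continuous on `[0,c]`, positive at `0`, and nonpositive somewhere in `[0,c]`,
then there is a first zero. -/
lemma aux_first_zero {f : ℝ → ℝ} {c : ℝ}
    (hcont : ContinuousOn f (Icc 0 c))
    (h0 : 0 < f 0) (hbad : ∃ x, x ∈ Icc 0 c ∧ f x ≤ 0) :
    ∃ u, 0 < u ∧ u ≤ c ∧ f u = 0 ∧ ∀ τ, 0 ≤ τ → τ < u → 0 < f τ := by
  obtain ⟨x₀, hx₀, hfx₀⟩ := hbad
  have hSc : IsClosed (Icc 0 c ∩ f ⁻¹' Iic 0) :=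
    hcont.preimage_isClosed_of_isClosed isClosed_Icc isClosed_Iic
  have hne : (Icc 0 c ∩ f ⁻¹' Iic 0).Nonempty := ⟨x₀, hx₀, hfx₀⟩
  have hbdd : BddBelow (Icc 0 c ∩ f ⁻¹' Iic 0) := ⟨0, fun y hy => hy.1.1⟩
  obtain ⟨⟨hu0, huc⟩, hufle⟩ := hSc.csInf_mem hne hbdd
  set u := sInf (Icc 0 c ∩ f ⁻¹' Iic 0) with hu
  have hpos : ∀ τ, 0 ≤ τ → τ < u → 0 < f τ := by
    intro τ hτ0 hτu
    by_contra hle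
    push_neg at hle
    exact absurd (csInf_le hbdd ⟨⟨hτ0, hτu.le.trans huc⟩, hle⟩) (not_le.2 hτu)
  have hu0' : 0 < u := by
    rcases hu0.lt_or_eq with h | h
    · exact h
    · rw [← h] at hufle; simp only [Set.mem_preimage, Set.mem_Iic] at hufle; linarith
  have hge : 0 ≤ f u := by
    have hcw : ContinuousWithinAt f (Ico 0 u) u :=
      (hcont u ⟨hu0, huc⟩).mono (fun y hy => ⟨hy.1, hy.2.le.trans huc⟩)
    have hnb : (𝓝[Ico (0:ℝ) u] u).NeBot := by
      rw [← mem_closure_iff_nhdsWithin_neBot, closure_Ico (ne_of_lt hu0')]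
      exact ⟨hu0, le_refl u⟩
    exact ge_of_tendsto hcw
      (eventually_nhdsWithin_of_forall (fun x hx => (hpos x hx.1 hx.2).le))
  exact ⟨u, hu0', huc, le_antisymm hufle hge, hpos⟩

/-- A function positive before `u`, vanishing at `u`, cannot have positive derivative at `u`. -/
lemma aux_slope_contra {f : ℝ → ℝ} {u d : ℝ} (hd : HasDerivAt f d u) (hdp : 0 < d)
    (hfu : f u = 0) (hu : 0 < u) (hpos : ∀ τ, 0 ≤ τ → τ < u → 0 < f τ) : False := by
  have hs := hasDerivAt_iff_tendsto_slope.mp hd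
  have h1 : ∀ᶠ x in 𝓝[≠] u, 0 < slope f u x := hs.eventually (eventually_gt_nhds hdp)
  have h2 : ∀ᶠ x in 𝓝[<] u, 0 < slope f u x :=
    h1.filter_mono (nhdsWithin_mono u (fun x hx => ne_of_lt hx))
  have h3 : ∀ᶠ x in 𝓝[<] u, 0 < x := eventually_nhdsWithin_of_eventually_nhds (eventually_gt_nhds hu)
  have h4 : ∀ᶠ x in 𝓝[<] u, x < u := eventually_mem_nhdsWithin
  obtain ⟨x, hsl, hx0, hxu⟩ := (h2.and (h3.and h4)).exists
  have hfx := hpos x hx0.le hxu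
  rw [slope_def_field, hfu, sub_zero] at hsl
  rcases div_pos_iff.mp hsl with ⟨h5, h6⟩ | ⟨h5, h6⟩ <;> linarith

/-- Convexity argument for the boundary quadratic. -/
lemma aux_quad {C₂ C₁ C₀ q A : ℝ} (h2 : 0 ≤ C₂) (h0 : C₀ < 0) (hq : 0 < q) (hA : q ≤ A)
    (hFq : 0 < C₂*q^2 - C₁*q + C₀) : 0 < C₂*A^2 - C₁*A + C₀ := by
  have hA0 : 0 < A := lt_of_lt_of_le hq hA
  have key : q*(C₂*A^2 - C₁*A + C₀) = A*(C₂*q^2 - C₁*q + C₀) + (A-q)*(C₂*A*q - C₀) := by ring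
  have h1 : 0 < A*(C₂*q^2 - C₁*q + C₀) := mul_pos hA0 hFq
  have h2' : 0 ≤ (A-q)*(C₂*A*q - C₀) := by
    apply mul_nonneg (by linarith)
    nlinarith [mul_nonneg (mul_nonneg h2 hA0.le) hq.le]
  by_contra hcon
  push_neg at hcon
  have hle : q*(C₂*A^2 - C₁*A + C₀) ≤ 0 := mul_nonpos_of_nonneg_of_nonpos hq.le hcon
  rw [key] at hle
  linarith


/-- The key estimate: `p(t) q(t)² + (m'(t)+1) q(t) < 1` for `t ≥ 0`. -/
lemma aux_key_est (s m₁ m₂ n₁ n₂ M N : ℝ) (hs : 1 ≤ s) (hN0 : 0 < N) (hN1 : N < 1)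
    (hM : M > N + s) (hn₁pos : 0 < n₁) (hn₂ : 1 < n₂) (hm₁pos : 0 < m₁)
    (hm₂n₂ : n₂ < m₂)
    (hK : n₁/m₁ + M*n₁ + n₁^2/m₁^2 < m₂ ^ ((1:ℝ)-N))
    (t : ℝ) (ht : 0 ≤ t) :
    (t+1)^s * (n₁*(t+n₂)^N / (m₁*(t+m₂)^M))^2
      + (m₁*(M*(t+m₂)^(M-1)) + 1) * (n₁*(t+n₂)^N / (m₁*(t+m₂)^M)) < 1 := by
  have hMpos : 0 < M := by linarith
  have hQ1 : 1 < t + n₂ := by linarith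
  have hP1 : 1 < t + m₂ := by linarith
  have hQ0 : (0:ℝ) < t + n₂ := by linarith
  have hP0 : (0:ℝ) < t + m₂ := by linarith
  have hQP : t + n₂ ≤ t + m₂ := by linarith
  set P := t + m₂ with hP
  set Q := t + n₂ with hQdef
  set q := n₁*Q^N / (m₁*P^M) with hqdef
  set r := P^(N-1) with hrdef
  have hPM : (0:ℝ) < P^M := rpow_pos_of_pos hP0 M
  have hq0 : 0 ≤ q := by positivity
  have hQN : Q^N ≤ P^N := Real.rpow_le_rpow hQ0.le hQP hN0.le
  -- Step A
  have hqA : q ≤ n₁/m₁ * P^(N-M) := by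
    have e1 : n₁/m₁ * P^(N-M) = n₁ * P^N / (m₁ * P^M) := by
      rw [Real.rpow_sub hP0]; field_simp
    rw [e1, hqdef]
    gcongr
  have hPNM : P^(N-M) ≤ r := Real.rpow_le_rpow_of_exponent_le hP1.le (by linarith)
  have hqD : q ≤ n₁/m₁ * r := hqA.trans (by gcongr)
  -- Step B
  have hB : (t+1)^s * q^2 ≤ (n₁/m₁)^2 * r := by
    have h1 : (t+1)^s ≤ P^s := Real.rpow_le_rpow (by linarith) (by linarith) (by linarith)
    have h2 : q^2 ≤ (n₁/m₁ * P^(N-M))^2 := by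
      apply pow_le_pow_left₀ hq0 hqA
    have h3 : P^s * (P^(N-M))^2 ≤ r := by
      have e2 : P^s * (P^(N-M))^2 = P^(s+((N-M)+(N-M))) := by
        rw [Real.rpow_add hP0, Real.rpow_add hP0]; ring
      rw [e2]
      exact Real.rpow_le_rpow_of_exponent_le hP1.le (by linarith)
    calc (t+1)^s * q^2 ≤ P^s * ((n₁/m₁ * P^(N-M))^2) := by
          apply mul_le_mul h1 h2 (by positivity) (by positivity)
      _ = (n₁/m₁)^2 * (P^s * (P^(N-M))^2) := by ring
      _ ≤ (n₁/m₁)^2 * r := by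
          apply mul_le_mul_of_nonneg_left h3 (by positivity)
  -- Step C
  have hC : m₁*(M*P^(M-1)) * q ≤ M*n₁*r := by
    have key : m₁*(M*P^(M-1)) * q = M*n₁*(Q^N * (P^(M-1)/P^M)) := by
      rw [hqdef]; field_simp
    have e4 : P^N * (P^(M-1)/P^M) = r := by
      rw [← Real.rpow_sub hP0, ← Real.rpow_add hP0, hrdef]; congr 1; ring
    calc m₁*(M*P^(M-1)) * q = M*n₁*(Q^N * (P^(M-1)/P^M)) := key
      _ ≤ M*n₁*(P^N * (P^(M-1)/P^M)) := by
          have : (0:ℝ) ≤ P^(M-1)/P^M := by positivity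
          have hMn : (0:ℝ) ≤ M*n₁ := by positivity
          apply mul_le_mul_of_nonneg_left (mul_le_mul_of_nonneg_right hQN this) hMn
      _ = M*n₁*r := by rw [e4]
  -- combine
  have hr2 : r ≤ m₂ ^ (N-1) := Real.rpow_le_rpow_of_nonpos (by linarith) (by linarith) (by linarith)
  have hfin : ((n₁/m₁)^2 + M*n₁ + n₁/m₁) * m₂^(N-1) < 1 := by
    have hKpos : (0:ℝ) < m₂^((1:ℝ)-N) := rpow_pos_of_pos (by linarith) _
    have e5 : m₂^(N-1) = (m₂^((1:ℝ)-N))⁻¹ := by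
      rw [show N-1 = -((1:ℝ)-N) by ring, Real.rpow_neg (by linarith)]
    rw [e5]
    calc ((n₁/m₁)^2 + M*n₁ + n₁/m₁) * (m₂^((1:ℝ)-N))⁻¹
        < m₂^((1:ℝ)-N) * (m₂^((1:ℝ)-N))⁻¹ := by
          apply mul_lt_mul_of_pos_right _ (inv_pos.2 hKpos)
          rw [div_pow]
          linarith
      _ = 1 := mul_inv_cancel₀ (ne_of_gt hKpos)
  have hrpos : 0 ≤ r := by positivity
  calc (t+1)^s * q^2 + (m₁*(M*P^(M-1)) + 1) * q
      = (t+1)^s * q^2 + (m₁*(M*P^(M-1))*q + q) := by ring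
    _ ≤ (n₁/m₁)^2*r + (M*n₁*r + n₁/m₁*r) := by
        have := add_le_add hC hqD
        linarith [hB]
    _ = ((n₁/m₁)^2 + M*n₁ + n₁/m₁) * r := by ring
    _ ≤ ((n₁/m₁)^2 + M*n₁ + n₁/m₁) * m₂^(N-1) := by
        apply mul_le_mul_of_nonneg_left hr2 (by positivity)
    _ < 1 := hfin



/-- Invariance of the region `Ω_s = {a > 0, b > 0, b > m* a − n*}` for the auxiliary
system `b' = −b²/2 − (t+1)^s a² − a + 1`, `a' = −b a` (polynomial case). -/
theorem auxiliary_invariant_region_poly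
    (s m₁ m₂ n₁ n₂ M N : ℝ)
    (hs : 1 ≤ s)
    (hN0 : 0 < N) (hN1 : N < 1)
    (hM : M > N + s)
    (hn₁ : n₁ > 1 + Real.sqrt 3)
    (hn₂ : n₂ > 1)
    (hm₁ : m₁ > Real.sqrt 2)
    (hm₂ : m₂ > max (max n₂ (((m₁ * n₁ + M * m₁ ^ 2 * n₁ + n₁ ^ 2) / m₁ ^ 2) ^ (1 / (1 - N))))
        ((n₁ / (2 * m₁) * (1 + Real.sqrt 5)) ^ (1 / (M - N - s))))
    (T : EReal) (hT : 0 < T)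
    (a b : ℝ → ℝ)
    (hb : ∀ t : ℝ, 0 ≤ t → (t : EReal) < T →
      HasDerivAt b (-(b t) ^ 2 / 2 - (t + 1) ^ s * (a t) ^ 2 - a t + 1) t)
    (ha : ∀ t : ℝ, 0 ≤ t → (t : EReal) < T →
      HasDerivAt a (-(b t) * a t) t)
    (ha0 : 0 < a 0) (hb0 : 0 < b 0)
    (hthr : b 0 > m₁ * m₂ ^ M * a 0 - n₁ * n₂ ^ N) :
    ∀ t : ℝ, 0 ≤ t → (t : EReal) < T →
      0 < b t ∧ 0 < a t ∧ a t ≤ a 0 := by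
  -- basic numeric facts
  have hm₁pos : 0 < m₁ := lt_of_le_of_lt (Real.sqrt_nonneg 2) hm₁
  have hm₁sq : 2 < m₁^2 := by
    nlinarith [Real.sq_sqrt (show (0:ℝ) ≤ 2 by norm_num), Real.sqrt_nonneg 2]
  have hn₁pos : 0 < n₁ := by nlinarith [Real.sqrt_nonneg 3]
  have hn₁big : 2*n₁ + 2 < n₁^2 := by
    nlinarith [Real.sq_sqrt (show (0:ℝ) ≤ 3 by norm_num), Real.sqrt_nonneg 3]
  have hMpos : 0 < M := by linarith
  have hm₂n₂ : n₂ < m₂ := lt_of_le_of_lt ((le_max_left _ _).trans (le_max_left _ _)) hm₂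
  have hm₂1 : 1 < m₂ := lt_trans hn₂ hm₂n₂
  have hK : n₁/m₁ + M*n₁ + n₁^2/m₁^2 < m₂ ^ ((1:ℝ)-N) := by
    have hbase0 : (0:ℝ) ≤ (m₁ * n₁ + M * m₁ ^ 2 * n₁ + n₁ ^ 2) / m₁ ^ 2 := by positivity
    have hm₂X : ((m₁ * n₁ + M * m₁ ^ 2 * n₁ + n₁ ^ 2) / m₁ ^ 2) ^ ((1:ℝ) / (1 - N)) < m₂ :=
      lt_of_le_of_lt ((le_max_right _ _).trans (le_max_left _ _)) hm₂
    have h1 : (((m₁ * n₁ + M * m₁ ^ 2 * n₁ + n₁ ^ 2) / m₁ ^ 2) ^ ((1:ℝ)/(1-N))) ^ ((1:ℝ)-N)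
        = (m₁ * n₁ + M * m₁ ^ 2 * n₁ + n₁ ^ 2) / m₁ ^ 2 := by
      rw [← Real.rpow_mul hbase0, one_div,
        inv_mul_cancel₀ (by linarith : (1:ℝ)-N ≠ 0), Real.rpow_one]
    have h2 := Real.rpow_lt_rpow (Real.rpow_nonneg hbase0 _) hm₂X (by linarith : (0:ℝ) < 1-N)
    rw [h1] at h2
    have h3 : (m₁ * n₁ + M * m₁ ^ 2 * n₁ + n₁ ^ 2) / m₁ ^ 2 = n₁/m₁ + M*n₁ + n₁^2/m₁^2 := by
      field_simp
    rw [h3] at h2; exact h2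
  intro t ht0 htT
  have hcoe : ∀ τ : ℝ, τ ≤ t → (τ : EReal) < T := fun τ hτ =>
    lt_of_le_of_lt (EReal.coe_le_coe_iff.mpr hτ) htT
  -- positivity of a on [0, t]
  have hapos : ∀ u, 0 ≤ u → u ≤ t → 0 < a u := by
    intro u hu0 hut
    by_contra hcon
    push_neg at hcon
    have hacont : ContinuousOn a (Icc 0 u) := fun τ hτ =>
      ((ha τ hτ.1 (hcoe τ (hτ.2.trans hut))).continuousAt).continuousWithinAt
    obtain ⟨w, hw0, hwu, hfw, hfpos⟩ :=
      aux_first_zero hacont ha0 ⟨u, ⟨hu0, le_refl u⟩, hcon⟩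
    have hwt : w ≤ t := hwu.trans hut
    have hbcont : ContinuousOn b (Icc 0 w) := fun τ hτ =>
      ((hb τ hτ.1 (hcoe τ (hτ.2.trans hwt))).continuousAt).continuousWithinAt
    obtain ⟨K, hKb⟩ := (isCompact_Icc).exists_bound_of_continuousOn hbcont
    have hmem : ∀ x : ℝ, x ∈ Icc (0:ℝ) w → w - x ∈ Icc (0:ℝ) w := by
      intro x hx; exact ⟨by linarith [hx.2], by linarith [hx.1]⟩
    have hg : ∀ x ∈ Ico (0:ℝ) w, HasDerivWithinAt (fun τ => a (w - τ))
        (b (w-x) * a (w-x)) (Ici x) x := by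
      intro x hx
      have h1 : HasDerivAt (fun τ : ℝ => w - τ) (-1) x := by
        simpa using (hasDerivAt_id x).const_sub w
      have hwx : w - x ∈ Icc (0:ℝ) w := hmem x ⟨hx.1, hx.2.le⟩
      have h2 : HasDerivAt a (-(b (w-x)) * a (w-x)) (w - x) :=
        ha _ hwx.1 (hcoe _ (hwx.2.trans hwt))
      have h3 := h2.comp x h1
      have h4 : HasDerivAt (fun τ => a (w - τ)) (b (w-x) * a (w-x)) x := by
        rw [show b (w-x) * a (w-x) = -(b (w-x)) * a (w-x) * -1 by ring]; exact h3
      exact h4.hasDerivWithinAt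
    have hgcont : ContinuousOn (fun τ => a (w - τ)) (Icc 0 w) := by
      intro x hx
      have hwx : w - x ∈ Icc (0:ℝ) w := hmem x hx
      have : ContinuousAt (fun τ => a (w - τ)) x :=
        ((ha _ hwx.1 (hcoe _ (hwx.2.trans hwt))).continuousAt).comp
          ((continuous_const.sub continuous_id).continuousAt)
      exact this.continuousWithinAt
    have hbound : ∀ x ∈ Ico (0:ℝ) w, ‖b (w-x) * a (w-x)‖ ≤ (K+1) * ‖a (w - x)‖ + 0 := by
      intro x hx
      rw [norm_mul, add_zero]
      apply mul_le_mul_of_nonneg_right _ (norm_nonneg _)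
      have := hKb (w-x) (hmem x ⟨hx.1, hx.2.le⟩)
      linarith
    have hinit : ‖(fun τ => a (w - τ)) 0‖ ≤ 0 := by
      simp only [sub_zero, hfw, norm_zero, le_refl]
    have hfin := norm_le_gronwallBound_of_norm_deriv_right_le hgcont hg hinit hbound
      w ⟨hw0.le, le_refl w⟩
    rw [gronwallBound_ε0_δ0] at hfin
    simp only [sub_self] at hfin
    have : a 0 = 0 := by
      have := norm_le_zero_iff.mp hfin
      exact this
    linarith
  -- invariance of b > 0 and G > 0 on [0, t]
  have hmder : ∀ τ : ℝ, 0 ≤ τ → HasDerivAt (fun x : ℝ => m₁*(x+m₂)^M)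
      (m₁ * (M * (τ + m₂)^(M-1))) τ := by
    intro τ hτ
    have h1 : HasDerivAt (fun x : ℝ => x + m₂) 1 τ := (hasDerivAt_id τ).add_const m₂
    have h2 : HasDerivAt (fun x : ℝ => x ^ M) (M * (τ + m₂)^(M-1)) (τ + m₂) :=
      Real.hasDerivAt_rpow_const (Or.inl (by positivity))
    have h3 := (h2.comp τ h1).const_mul m₁
    simpa [Function.comp] using h3
  have hnder : ∀ τ : ℝ, 0 ≤ τ → HasDerivAt (fun x : ℝ => n₁*(x+n₂)^N)
      (n₁ * (N * (τ + n₂)^(N-1))) τ := by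
    intro τ hτ
    have h1 : HasDerivAt (fun x : ℝ => x + n₂) 1 τ := (hasDerivAt_id τ).add_const n₂
    have h2 : HasDerivAt (fun x : ℝ => x ^ N) (N * (τ + n₂)^(N-1)) (τ + n₂) :=
      Real.hasDerivAt_rpow_const (Or.inl (by positivity))
    have h3 := (h2.comp τ h1).const_mul n₁
    simpa [Function.comp] using h3
  have hinv : ∀ τ, 0 ≤ τ → τ ≤ t →
      0 < b τ ∧ 0 < b τ - m₁*(τ+m₂)^M * a τ + n₁*(τ+n₂)^N := by
    by_contra hcon
    push_neg at hcon
    obtain ⟨u₀, hu₀0, hu₀t, hbadu⟩ := hcon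
    set f : ℝ → ℝ := fun τ => min (b τ) (b τ - m₁*(τ+m₂)^M * a τ + n₁*(τ+n₂)^N) with hf
    have hfu₀ : f u₀ ≤ 0 := by
      rcases le_or_gt (b u₀) 0 with h | h
      · exact le_trans (min_le_left _ _) h
      · exact le_trans (min_le_right _ _) (hbadu h)
    have hfcont : ContinuousOn f (Icc 0 u₀) := by
      intro τ hτ
      have hbc : ContinuousAt b τ := (hb τ hτ.1 (hcoe τ (hτ.2.trans hu₀t))).continuousAt
      have hac : ContinuousAt a τ := (ha τ hτ.1 (hcoe τ (hτ.2.trans hu₀t))).continuousAt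
      have hmc : ContinuousAt (fun x : ℝ => m₁*(x+m₂)^M) τ := (hmder τ hτ.1).continuousAt
      have hnc : ContinuousAt (fun x : ℝ => n₁*(x+n₂)^N) τ := (hnder τ hτ.1).continuousAt
      have hfc : ContinuousAt f τ := hbc.min ((hbc.sub (hmc.mul hac)).add hnc)
      exact hfc.continuousWithinAt
    have hf0 : 0 < f 0 := by
      apply lt_min hb0
      simp only [zero_add]
      linarith
    obtain ⟨u, hu0, huu₀, hmin, hbefore⟩ :=
      aux_first_zero hfcont hf0 ⟨u₀, ⟨hu₀0, le_refl u₀⟩, hfu₀⟩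
    have hut : u ≤ t := huu₀.trans hu₀t
    have huT : (u : EReal) < T := hcoe u hut
    have hbpos : ∀ τ, 0 ≤ τ → τ < u → 0 < b τ := fun τ h1 h2 =>
      lt_of_lt_of_le (hbefore τ h1 h2) (min_le_left _ _)
    have hGpos : ∀ τ, 0 ≤ τ → τ < u →
        0 < b τ - m₁*(τ+m₂)^M * a τ + n₁*(τ+n₂)^N := fun τ h1 h2 =>
      lt_of_lt_of_le (hbefore τ h1 h2) (min_le_right _ _)
    have hbu : 0 ≤ b u := hmin ▸ min_le_left _ _
    have hGu : 0 ≤ b u - m₁*(u+m₂)^M * a u + n₁*(u+n₂)^N := hmin ▸ min_le_right _ _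
    have hau : 0 < a u := hapos u hu0.le hut
    have hkey := aux_key_est s m₁ m₂ n₁ n₂ M N hs hN0 hN1 hM hn₁pos hn₂ hm₁pos hm₂n₂ hK u hu0.le
    have hmu : (0:ℝ) < m₁*(u+m₂)^M := by positivity
    have hnu : (0:ℝ) < n₁*(u+n₂)^N := by positivity
    have hpu : (0:ℝ) ≤ (u+1)^s := Real.rpow_nonneg (by linarith) s
    have hm'u : (0:ℝ) ≤ m₁*(M*(u+m₂)^(M-1)) := by positivity
    have hn'u : (0:ℝ) < n₁*(N*(u+n₂)^(N-1)) := by positivity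
    have hqu : (0:ℝ) < n₁*(u+n₂)^N / (m₁*(u+m₂)^M) := by positivity
    rcases min_eq_iff.mp hmin with ⟨hbu0, hble⟩ | ⟨hGu0, hGle⟩
    · -- case A : b u = 0
      have haq : a u ≤ n₁*(u+n₂)^N / (m₁*(u+m₂)^M) := by
        rw [le_div_iff₀ hmu]
        rw [hbu0] at hGu
        linarith
      have hd : 0 < -(b u)^2/2 - (u+1)^s*(a u)^2 - a u + 1 := by
        rw [hbu0]
        have h1 : (u+1)^s*(a u)^2 ≤ (u+1)^s*(n₁*(u+n₂)^N / (m₁*(u+m₂)^M))^2 := by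
          apply mul_le_mul_of_nonneg_left _ hpu
          exact pow_le_pow_left₀ hau.le haq 2
        have h2 : (m₁*(M*(u+m₂)^(M-1))+1)*(n₁*(u+n₂)^N / (m₁*(u+m₂)^M))
            = m₁*(M*(u+m₂)^(M-1))*(n₁*(u+n₂)^N / (m₁*(u+m₂)^M))
              + n₁*(u+n₂)^N / (m₁*(u+m₂)^M) := by ring
        have h3 : (0:ℝ) ≤ m₁*(M*(u+m₂)^(M-1))*(n₁*(u+n₂)^N / (m₁*(u+m₂)^M)) :=
          mul_nonneg hm'u hqu.le
        have h4 : (0:ℝ)^2/2 = 0 := by norm_num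
        linarith [hkey, h1, haq, h2, h3, h4]
      exact aux_slope_contra (hb u hu0.le huT) hd hbu0 hu0 hbpos
    · -- case B : G u = 0
      have hbval : b u = m₁*(u+m₂)^M * a u - n₁*(u+n₂)^N := by linarith
      have hqa : n₁*(u+n₂)^N / (m₁*(u+m₂)^M) ≤ a u := by
        rw [div_le_iff₀ hmu]
        linarith [hbu, hbval]
      have hb' := hb u hu0.le huT
      have ha' := ha u hu0.le huT
      have hm' := hmder u hu0.le
      have hn' := hnder u hu0.le
      have hG' : HasDerivAt (fun τ => b τ - m₁*(τ+m₂)^M * a τ + n₁*(τ+n₂)^N)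
          ((-(b u) ^ 2 / 2 - (u + 1) ^ s * (a u) ^ 2 - a u + 1)
            - (m₁ * (M * (u + m₂)^(M-1)) * a u + m₁*(u+m₂)^M * (-(b u) * a u))
            + n₁ * (N * (u + n₂)^(N-1))) u := (hb'.sub (hm'.mul ha')).add hn'
      -- value of the derivative at the boundary
      have hC₂ : (0:ℝ) ≤ (m₁*(u+m₂)^M)^2/2 - (u+1)^s := by
        have hup : (0:ℝ) < u + m₂ := by linarith
        have h1 : (u+1)^s ≤ (u+1)^(M+M) :=
          Real.rpow_le_rpow_of_exponent_le (by linarith) (by linarith)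
        have h2 : (u+1)^(M+M) ≤ (u+m₂)^(M+M) :=
          Real.rpow_le_rpow (by linarith) (by linarith) (by linarith)
        have h3 : (m₁*(u+m₂)^M)^2 = m₁^2*(u+m₂)^(M+M) := by
          have e : ((u+m₂)^M)^2 = (u+m₂)^(M+M) := by
            rw [sq, ← Real.rpow_add hup]
          rw [mul_pow, e]
        have h4 : (0:ℝ) ≤ (m₁^2 - 2) * (u+m₂)^(M+M) :=
          mul_nonneg (by linarith) (Real.rpow_nonneg (by linarith) (M+M))
        linarith [h1, h2, h3, h4]
      have hC₀ : 1 + n₁*(N*(u+n₂)^(N-1)) - (n₁*(u+n₂)^N)^2/2 < 0 := by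
        have e1 : (u+n₂)^(N-1) ≤ 1 :=
          Real.rpow_le_one_of_one_le_of_nonpos (by linarith) (by linarith)
        have e2 : (1:ℝ) ≤ (u+n₂)^N := Real.one_le_rpow (by linarith) hN0.le
        have e3 : n₁*(N*(u+n₂)^(N-1)) ≤ n₁*(N*1) :=
          mul_le_mul_of_nonneg_left (mul_le_mul_of_nonneg_left e1 hN0.le) hn₁pos.le
        have e4 : n₁*1 ≤ n₁*(u+n₂)^N := mul_le_mul_of_nonneg_left e2 hn₁pos.le
        have e5 : n₁^2 ≤ (n₁*(u+n₂)^N)^2 := by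
          apply pow_le_pow_left₀ hn₁pos.le (by linarith) 2
        have e6 : n₁*N ≤ n₁*1 := mul_le_mul_of_nonneg_left hN1.le hn₁pos.le
        linarith [e3, e4, e5, e6, hn₁big]
      have hmq : m₁*(u+m₂)^M * (n₁*(u+n₂)^N / (m₁*(u+m₂)^M)) = n₁*(u+n₂)^N := by
        field_simp
      have hFq : 0 < ((m₁*(u+m₂)^M)^2/2 - (u+1)^s)*(n₁*(u+n₂)^N / (m₁*(u+m₂)^M))^2
          - (m₁*(M*(u+m₂)^(M-1))+1)*(n₁*(u+n₂)^N / (m₁*(u+m₂)^M))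
          + (1 + n₁*(N*(u+n₂)^(N-1)) - (n₁*(u+n₂)^N)^2/2) := by
        have h5 : (m₁*(u+m₂)^M)^2*(n₁*(u+n₂)^N / (m₁*(u+m₂)^M))^2 = (n₁*(u+n₂)^N)^2 := by
          rw [← mul_pow, hmq]
        have e7 : ((m₁*(u+m₂)^M)^2/2 - (u+1)^s)*(n₁*(u+n₂)^N / (m₁*(u+m₂)^M))^2
            - (m₁*(M*(u+m₂)^(M-1))+1)*(n₁*(u+n₂)^N / (m₁*(u+m₂)^M))
            + (1 + n₁*(N*(u+n₂)^(N-1)) - (n₁*(u+n₂)^N)^2/2)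
            = 1 + n₁*(N*(u+n₂)^(N-1))
              - ((u+1)^s*(n₁*(u+n₂)^N / (m₁*(u+m₂)^M))^2
                + (m₁*(M*(u+m₂)^(M-1))+1)*(n₁*(u+n₂)^N / (m₁*(u+m₂)^M))) := by
          linear_combination h5 / 2
        rw [e7]
        linarith [hkey, hn'u]
      have hVpos := aux_quad hC₂ hC₀ hqu hqa hFq
      have hVeq : ((-(b u) ^ 2 / 2 - (u + 1) ^ s * (a u) ^ 2 - a u + 1)
            - (m₁ * (M * (u + m₂)^(M-1)) * a u + m₁*(u+m₂)^M * (-(b u) * a u))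
            + n₁ * (N * (u + n₂)^(N-1)))
          = ((m₁*(u+m₂)^M)^2/2 - (u+1)^s)*(a u)^2
            - (m₁*(M*(u+m₂)^(M-1))+1)*(a u)
            + (1 + n₁*(N*(u+n₂)^(N-1)) - (n₁*(u+n₂)^N)^2/2) := by
        rw [hbval]; ring
      rw [← hVeq] at hVpos
      exact aux_slope_contra hG' hVpos hGu0 hu0 hGpos
  -- conclusion
  refine ⟨(hinv t ht0 le_rfl).1, hapos t ht0 le_rfl, ?_⟩
  rcases eq_or_lt_of_le ht0 with h | h
  · rw [← h]
  · have hacont : ContinuousOn a (Icc 0 t) := fun τ hτ =>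
      ((ha τ hτ.1 (hcoe τ hτ.2)).continuousAt).continuousWithinAt
    have hanti : StrictAntiOn a (Icc 0 t) := by
      apply strictAntiOn_of_deriv_neg (convex_Icc 0 t) hacont
      intro x hx
      rw [interior_Icc] at hx
      rw [(ha x hx.1.le (hcoe x hx.2.le)).deriv]
      have h1 := (hinv x hx.1.le hx.2.le).1
      have h2 := hapos x hx.1.le hx.2.le
      have := mul_pos h1 h2
      linarith
    exact (hanti ⟨le_refl 0, h.le⟩ ⟨h.le, le_refl t⟩ h).le
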